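/- Let Θ = {θ ∈ R^d : 0 < θ_i ≤ 1, Σ_i θ_i ≤ k} for k ∈ {1,…,d}. Then the Θ-norm ‖w‖_Θ = sqrt(inf_{θ∈Θ} Σ_i w_i²/θ_i) equals the k-support norm, i.e. its unit ball is the convex hull of {w : card(supp(w)) ≤ k, ‖w‖₂ ≤ 1}. -/

import Mathlib

open Set Finset


noncomputable def thetaNorm {d : ℕ} (Θ : Set (Fin d → ℝ)) (w : Fin d → ℝ) : ℝ :=
  Real.sqrt (⨅ θ : Θ, ∑ i, w i ^ 2 / (θ : Fin d → ℝ) i)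

variable {d : ℕ}

section Aux
variable {k : ℕ}

variable {d k : ℕ}

noncomputable def eNorm {d : ℕ} (w : Fin d → ℝ) : ℝ := Real.sqrt (∑ i, w i ^ 2)

lemma eNorm_eq (w : Fin d → ℝ) :
    eNorm w = ‖(WithLp.equiv 2 (Fin d → ℝ)).symm w‖ := by
  rw [eNorm, EuclideanSpace.norm_eq]
  congr 1
  refine Finset.sum_congr rfl fun i _ => ?_
  rw [show ((WithLp.equiv 2 (Fin d → ℝ)).symm w).ofLp i = w i from rfl, Real.norm_eq_abs, sq_abs]

lemma eNorm_combo (a b : ℝ) (x y : Fin d → ℝ) (ha : 0 ≤ a) (hb : 0 ≤ b) :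
    eNorm (a • x + b • y) ≤ a * eNorm x + b * eNorm y := by
  rw [eNorm_eq, eNorm_eq, eNorm_eq]
  have : (WithLp.equiv 2 (Fin d → ℝ)).symm (a • x + b • y)
      = a • (WithLp.equiv 2 (Fin d → ℝ)).symm x + b • (WithLp.equiv 2 (Fin d → ℝ)).symm y := rfl
  rw [this]
  calc ‖a • (WithLp.equiv 2 (Fin d → ℝ)).symm x + b • (WithLp.equiv 2 (Fin d → ℝ)).symm y‖
      ≤ ‖a • (WithLp.equiv 2 (Fin d → ℝ)).symm x‖ + ‖b • (WithLp.equiv 2 (Fin d → ℝ)).symm y‖ :=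
        norm_add_le _ _
    _ ≤ a * ‖(WithLp.equiv 2 (Fin d → ℝ)).symm x‖ + b * ‖(WithLp.equiv 2 (Fin d → ℝ)).symm y‖ := by
        rw [norm_smul, norm_smul, Real.norm_eq_abs, Real.norm_eq_abs, abs_of_nonneg ha, abs_of_nonneg hb]

variable {d k : ℕ}

lemma isCompact_convexJoin {s t : Set (Fin d → ℝ)} (hs : IsCompact s) (ht : IsCompact t) :
    IsCompact (convexJoin ℝ s t) := by
  have : convexJoin ℝ s t =
      (fun p : ℝ × (Fin d → ℝ) × (Fin d → ℝ) => p.1 • p.2.1 + (1 - p.1) • p.2.2) ''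
        ((Set.Icc (0:ℝ) 1) ×ˢ s ×ˢ t) := by
    ext z
    simp only [convexJoin, Set.mem_iUnion, Set.mem_image, Set.mem_prod, Set.mem_Icc, segment]
    constructor
    · rintro ⟨x, hx, y, hy, a, b, ha, hb, hab, rfl⟩
      exact ⟨⟨a, x, y⟩, ⟨⟨ha, by linarith⟩, hx, hy⟩, by rw [show b = 1 - a by linarith]⟩
    · rintro ⟨⟨a, x, y⟩, ⟨⟨ha0, ha1⟩, hx, hy⟩, rfl⟩
      exact ⟨x, hx, y, hy, a, 1 - a, ha0, by linarith, by ring, rfl⟩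
  rw [this]
  apply ((isCompact_Icc.prod (hs.prod ht))).image
  fun_prop

lemma isCompact_convexHull_union {ι : Type*} (s : Finset ι) (K : ι → Set (Fin d → ℝ))
    (hne : s.Nonempty) (hK : ∀ i, IsCompact (K i)) (hKc : ∀ i, Convex ℝ (K i))
    (hKn : ∀ i, (K i).Nonempty) :
    IsCompact (convexHull ℝ (⋃ i ∈ s, K i)) ∧ Convex ℝ (convexHull ℝ (⋃ i ∈ s, K i))
      ∧ (convexHull ℝ (⋃ i ∈ s, K i)).Nonempty := by
  classical
  induction hne using Finset.Nonempty.cons_induction with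
  | singleton j =>
    have he : (⋃ i ∈ ({j} : Finset ι), K i) = K j := by simp
    rw [he, (hKc j).convexHull_eq]
    exact ⟨hK j, hKc j, hKn j⟩
  | cons j s hj hsne ih =>
    obtain ⟨ihc, ihconv, ihne⟩ := ih
    have key : convexHull ℝ (⋃ i ∈ Finset.cons j s hj, K i)
        = convexJoin ℝ (K j) (convexHull ℝ (⋃ i ∈ s, K i)) := by
      rw [Finset.cons_eq_insert, Finset.set_biUnion_insert, ← convexHull_convexHull_union_right,
        Convex.convexHull_union (hKc j) ihconv (hKn j) ihne]
    rw [key]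
    exact ⟨isCompact_convexJoin (hK j) ihc, (hKc j).convexJoin ihconv,
      ihne.mono (subset_convexJoin_right (hKn j))⟩

variable {d k : ℕ}


def Sset (d k : ℕ) : Set (Fin d → ℝ) :=
  {w | {i | w i ≠ 0}.ncard ≤ k ∧ Real.sqrt (∑ i, w i ^ 2) ≤ 1}

def Cset (A : Finset (Fin d)) : Set (Fin d → ℝ) :=
  {w | (∀ i, i ∉ A → w i = 0) ∧ Real.sqrt (∑ i, w i ^ 2) ≤ 1}

lemma sq_sum_le_one {w : Fin d → ℝ} (h : Real.sqrt (∑ i, w i ^ 2) ≤ 1) :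
    ∑ i, w i ^ 2 ≤ 1 := by
  have h0 : (0:ℝ) ≤ ∑ i, w i ^ 2 := Finset.sum_nonneg fun i _ => sq_nonneg _
  nlinarith [Real.sq_sqrt h0, Real.sqrt_nonneg (∑ i, w i ^ 2)]

lemma convex_Cset (A : Finset (Fin d)) : Convex ℝ (Cset A) := by
  rintro x ⟨hx0, hx1⟩ y ⟨hy0, hy1⟩ a b ha hb hab
  refine ⟨fun i hi => by simp [hx0 i hi, hy0 i hi], ?_⟩
  calc Real.sqrt (∑ i, (a • x + b • y) i ^ 2) = eNorm (a • x + b • y) := rfl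
    _ ≤ a * eNorm x + b * eNorm y := eNorm_combo a b x y ha hb
    _ ≤ a * 1 + b * 1 := by
        apply add_le_add (mul_le_mul_of_nonneg_left hx1 ha) (mul_le_mul_of_nonneg_left hy1 hb)
    _ = 1 := by linarith

lemma isCompact_Cset (A : Finset (Fin d)) : IsCompact (Cset A) := by
  have hsub : Cset A ⊆ Metric.closedBall (0 : Fin d → ℝ) 1 := by
    rintro w ⟨-, hw1⟩
    rw [Metric.mem_closedBall]
    refine dist_pi_le_iff zero_le_one |>.2 fun i => ?_
    have h2 : w i ^ 2 ≤ 1 := le_trans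
      (Finset.single_le_sum (fun j _ => sq_nonneg (w j)) (Finset.mem_univ i)) (sq_sum_le_one hw1)
    rw [Real.dist_eq, show (0 : Fin d → ℝ) i = 0 from rfl, sub_zero]
    nlinarith [abs_nonneg (w i), sq_abs (w i)]
  have hcl : IsClosed (Cset A) := by
    have h1 : IsClosed {w : Fin d → ℝ | ∀ i, i ∉ A → w i = 0} := by
      have : {w : Fin d → ℝ | ∀ i, i ∉ A → w i = 0}
          = ⋂ i ∈ (Finset.univ \ A), {w : Fin d → ℝ | w i = 0} := by
        ext w; simp [Finset.mem_sdiff]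
      rw [this]
      exact isClosed_biInter fun i _ => isClosed_eq (continuous_apply i) continuous_const
    have h2 : IsClosed {w : Fin d → ℝ | Real.sqrt (∑ i, w i ^ 2) ≤ 1} := by
      apply isClosed_le _ continuous_const
      exact Real.continuous_sqrt.comp (continuous_finset_sum _ fun i _ => (continuous_apply i).pow 2)
    exact h1.inter h2
  exact (isCompact_closedBall _ _).of_isClosed_subset hcl hsub

lemma Sset_eq_union :
    Sset d k = ⋃ A ∈ (Finset.univ : Finset (Finset (Fin d))).filter (fun A => A.card ≤ k),
      Cset A := by
  ext w
  simp only [Set.mem_iUnion, Finset.mem_filter, Finset.mem_univ, true_and]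
  constructor
  · rintro ⟨hcard, hnorm⟩
    classical
    refine ⟨Finset.univ.filter (fun i => w i ≠ 0), ?_, fun i hi => by simpa using hi, hnorm⟩
    have : {i | w i ≠ 0} = ↑(Finset.univ.filter (fun i => w i ≠ 0)) := by ext i; simp
    rwa [this, Set.ncard_coe_finset] at hcard
  · rintro ⟨A, hA, h0, hnorm⟩
    refine ⟨?_, hnorm⟩
    have hsub : {i | w i ≠ 0} ⊆ (A : Set (Fin d)) := fun i hi => by
      by_contra h; exact hi (h0 i h)
    calc {i | w i ≠ 0}.ncard ≤ (A : Set (Fin d)).ncard :=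
          Set.ncard_le_ncard hsub (A : Set (Fin d)).toFinite
      _ = A.card := Set.ncard_coe_finset A
      _ ≤ k := hA



lemma isClosed_hull_S : IsClosed (convexHull ℝ (Sset d k)) := by
  rw [Sset_eq_union]
  refine (isCompact_convexHull_union _ _ ?_ isCompact_Cset convex_Cset ?_).1.isClosed
  · exact ⟨∅, by simp⟩
  · exact fun A => ⟨0, fun i _ => rfl, by simp⟩

variable {d : ℕ}

def Vset (d k : ℕ) : Set (Fin d → ℝ) :=
  {θ | ∃ A : Finset (Fin d), A.card ≤ k ∧ θ = fun i => if i ∈ A then (1:ℝ) else 0}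

lemma mem_hull_V_aux (k : ℕ) (n : ℕ) : ∀ θ : Fin d → ℝ, (∀ i, 0 ≤ θ i) → (∀ i, θ i ≤ 1) →
    ∑ i, θ i ≤ (k:ℝ) → (Finset.univ.filter fun i => θ i ≠ 0 ∧ θ i ≠ 1).card ≤ n →
    θ ∈ convexHull ℝ (Vset d k) := by
  classical
  induction n with
  | zero =>
    intro θ h0 h1 hs hc
    have hF : (Finset.univ.filter fun i => θ i ≠ 0 ∧ θ i ≠ 1) = ∅ :=
      Finset.card_eq_zero.1 (Nat.le_zero.1 hc)
    have h01 : ∀ i, θ i = 0 ∨ θ i = 1 := by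
      intro i
      by_contra h
      push_neg at h
      have : i ∈ (Finset.univ.filter fun i => θ i ≠ 0 ∧ θ i ≠ 1) := by
        simp [h.1, h.2]
      rw [hF] at this
      exact absurd this (Finset.notMem_empty i)
    set A := Finset.univ.filter (fun i => θ i = 1) with hA
    have hθA : θ = fun i => if i ∈ A then (1:ℝ) else 0 := by
      funext i
      rcases h01 i with h | h <;> simp [hA, h]
    have hsum : ∑ i, θ i = (A.card : ℝ) := by
      rw [hθA]
      simp [Finset.sum_ite_mem, Finset.univ_inter]
    have hAk : A.card ≤ k := by
      rw [hsum] at hs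
      exact_mod_cast hs
    exact subset_convexHull ℝ _ ⟨A, hAk, hθA⟩
  | succ n ih =>
    intro θ h0 h1 hs hc
    by_cases hF : (Finset.univ.filter fun i => θ i ≠ 0 ∧ θ i ≠ 1).card ≤ n
    · exact ih θ h0 h1 hs hF
    set F := Finset.univ.filter fun i => θ i ≠ 0 ∧ θ i ≠ 1 with hFdef
    have hFne : F.Nonempty := by
      rw [← Finset.card_pos]; omega
    obtain ⟨i, hiF⟩ := hFne
    have hi0 : θ i ≠ 0 := (Finset.mem_filter.1 hiF).2.1
    have hi1 : θ i ≠ 1 := (Finset.mem_filter.1 hiF).2.2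
    have hia : 0 < θ i := lt_of_le_of_ne (h0 i) (Ne.symm hi0)
    have hib : θ i < 1 := lt_of_le_of_ne (h1 i) hi1
    by_cases hj : ∃ j ∈ F, j ≠ i
    · -- two fractional coordinates: shift mass
      obtain ⟨j, hjF, hji⟩ := hj
      have hj0 : θ j ≠ 0 := (Finset.mem_filter.1 hjF).2.1
      have hj1 : θ j ≠ 1 := (Finset.mem_filter.1 hjF).2.2
      have hja : 0 < θ j := lt_of_le_of_ne (h0 j) (Ne.symm hj0)
      have hjb : θ j < 1 := lt_of_le_of_ne (h1 j) hj1
      set e : Fin d → ℝ := fun l => (if l = i then (1:ℝ) else 0) - (if l = j then (1:ℝ) else 0)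
        with he
      have hei : e i = 1 := by simp [he, hji.symm, Ne.symm hji]
      have hej : e j = -1 := by simp [he, hji]
      have hel : ∀ l, l ≠ i → l ≠ j → e l = 0 := by intro l hl1 hl2; simp [he, hl1, hl2]
      have hesum : ∑ l, e l = 0 := by simp [he, Finset.sum_sub_distrib]
      set ε₁ := min (1 - θ i) (θ j) with hε₁
      set ε₂ := min (θ i) (1 - θ j) with hε₂
      have hε₁pos : 0 < ε₁ := lt_min (by linarith) hja
      have hε₂pos : 0 < ε₂ := lt_min hia (by linarith)
      -- the two perturbed vectors
      set θ₁ : Fin d → ℝ := fun l => θ l + ε₁ * e l with hθ₁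
      set θ₂ : Fin d → ℝ := fun l => θ l - ε₂ * e l with hθ₂
      have hε₁a : ε₁ ≤ 1 - θ i := min_le_left _ _
      have hε₁b : ε₁ ≤ θ j := min_le_right _ _
      have hε₂a : ε₂ ≤ θ i := min_le_left _ _
      have hε₂b : ε₂ ≤ 1 - θ j := min_le_right _ _
      -- bounds for θ₁
      have h0₁ : ∀ l, 0 ≤ θ₁ l := by
        intro l
        rcases eq_or_ne l i with rfl | hl1
        · simp only [hθ₁, hei]; nlinarith
        rcases eq_or_ne l j with rfl | hl2
        · simp only [hθ₁, hej]; nlinarith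
        · simp only [hθ₁, hel l hl1 hl2]; simpa using h0 l
      have h1₁ : ∀ l, θ₁ l ≤ 1 := by
        intro l
        rcases eq_or_ne l i with rfl | hl1
        · simp only [hθ₁, hei]; nlinarith
        rcases eq_or_ne l j with rfl | hl2
        · simp only [hθ₁, hej]; nlinarith
        · simp only [hθ₁, hel l hl1 hl2]; simpa using h1 l
      have h0₂ : ∀ l, 0 ≤ θ₂ l := by
        intro l
        rcases eq_or_ne l i with rfl | hl1
        · simp only [hθ₂, hei]; nlinarith
        rcases eq_or_ne l j with rfl | hl2
        · simp only [hθ₂, hej]; nlinarith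
        · simp only [hθ₂, hel l hl1 hl2]; simpa using h0 l
      have h1₂ : ∀ l, θ₂ l ≤ 1 := by
        intro l
        rcases eq_or_ne l i with rfl | hl1
        · simp only [hθ₂, hei]; nlinarith
        rcases eq_or_ne l j with rfl | hl2
        · simp only [hθ₂, hej]; nlinarith
        · simp only [hθ₂, hel l hl1 hl2]; simpa using h1 l
      have hs₁ : ∑ l, θ₁ l ≤ (k:ℝ) := by
        have : ∑ l, θ₁ l = ∑ l, θ l + ε₁ * ∑ l, e l := by
          rw [Finset.mul_sum, ← Finset.sum_add_distrib]
        rw [this, hesum]; simpa using hs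
      have hs₂ : ∑ l, θ₂ l ≤ (k:ℝ) := by
        have : ∑ l, θ₂ l = ∑ l, θ l - ε₂ * ∑ l, e l := by
          rw [Finset.mul_sum, ← Finset.sum_sub_distrib]
        rw [this, hesum]; simpa using hs
      -- fractional sets shrink
      have hsub : ∀ (θ' : Fin d → ℝ), (∀ l, l ≠ i → l ≠ j → θ' l = θ l) →
          (Finset.univ.filter fun l => θ' l ≠ 0 ∧ θ' l ≠ 1) ⊆ F := by
        intro θ' hθ' l hl
        rcases eq_or_ne l i with rfl | hl1
        · exact hiF
        rcases eq_or_ne l j with rfl | hl2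
        · exact hjF
        · simp only [Finset.mem_filter, Finset.mem_univ, true_and] at hl
          rw [hθ' l hl1 hl2] at hl
          exact Finset.mem_filter.2 ⟨Finset.mem_univ l, hl⟩
      have hcard₁ : (Finset.univ.filter fun l => θ₁ l ≠ 0 ∧ θ₁ l ≠ 1).card ≤ n := by
        have hss : (Finset.univ.filter fun l => θ₁ l ≠ 0 ∧ θ₁ l ≠ 1) ⊂ F := by
          refine ⟨hsub θ₁ (fun l hl1 hl2 => by simp [hθ₁, hel l hl1 hl2]), ?_⟩
          intro hcon
          rcases le_or_gt (1 - θ i) (θ j) with hmin | hmin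
          · have : ε₁ = 1 - θ i := min_eq_left hmin
            have h1i : θ₁ i = 1 := by simp [hθ₁, hei, this]
            have := hcon hiF
            simp only [Finset.mem_filter, Finset.mem_univ, true_and, h1i] at this
            exact this.2 rfl
          · have : ε₁ = θ j := min_eq_right hmin.le
            have h1j : θ₁ j = 0 := by simp [hθ₁, hej, this]
            have := hcon hjF
            simp only [Finset.mem_filter, Finset.mem_univ, true_and, h1j] at this
            exact this.1 rfl
        have := Finset.card_lt_card hss
        omega
      have hcard₂ : (Finset.univ.filter fun l => θ₂ l ≠ 0 ∧ θ₂ l ≠ 1).card ≤ n := by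
        have hss : (Finset.univ.filter fun l => θ₂ l ≠ 0 ∧ θ₂ l ≠ 1) ⊂ F := by
          refine ⟨hsub θ₂ (fun l hl1 hl2 => by simp [hθ₂, hel l hl1 hl2]), ?_⟩
          intro hcon
          rcases le_or_gt (θ i) (1 - θ j) with hmin | hmin
          · have : ε₂ = θ i := min_eq_left hmin
            have h1i : θ₂ i = 0 := by simp [hθ₂, hei, this]
            have := hcon hiF
            simp only [Finset.mem_filter, Finset.mem_univ, true_and, h1i] at this
            exact this.1 rfl
          · have : ε₂ = 1 - θ j := min_eq_right hmin.le
            have h1j : θ₂ j = 1 := by simp [hθ₂, hej, this]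
            have := hcon hjF
            simp only [Finset.mem_filter, Finset.mem_univ, true_and, h1j] at this
            exact this.2 rfl
        have := Finset.card_lt_card hss
        omega
      have hm₁ : θ₁ ∈ convexHull ℝ (Vset d k) := ih θ₁ h0₁ h1₁ hs₁ hcard₁
      have hm₂ : θ₂ ∈ convexHull ℝ (Vset d k) := ih θ₂ h0₂ h1₂ hs₂ hcard₂
      have hcomb : (ε₂ / (ε₁ + ε₂)) • θ₁ + (ε₁ / (ε₁ + ε₂)) • θ₂ = θ := by
        funext l
        have hne : ε₁ + ε₂ ≠ 0 := by positivity
        simp only [Pi.add_apply, Pi.smul_apply, smul_eq_mul, hθ₁, hθ₂]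
        field_simp
        ring
      rw [← hcomb]
      exact (convex_convexHull ℝ (Vset d k)) hm₁ hm₂ (by positivity) (by positivity)
        (by field_simp; ring)
    · -- exactly one fractional coordinate
      push_neg at hj
      have hone : ∀ l, l ≠ i → θ l = 0 ∨ θ l = 1 := by
        intro l hl
        by_contra h
        push_neg at h
        have : l ∈ F := by simp [hFdef, h.1, h.2]
        exact hl (hj l this)
      set S := Finset.univ.filter (fun l => θ l = 1) with hS
      have hiS : i ∉ S := by simp [hS, hi1]
      have hsum : ∑ l, θ l = θ i + (S.card : ℝ) := by
        have hsub : insert i S ⊆ Finset.univ := Finset.subset_univ _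
        have hz : ∀ l ∈ Finset.univ, l ∉ insert i S → θ l = 0 := by
          intro l _ hl
          simp only [Finset.mem_insert] at hl
          push_neg at hl
          rcases hone l hl.1 with h | h
          · exact h
          · exact absurd (by simp [hS, h]) hl.2
        rw [← Finset.sum_subset hsub hz, Finset.sum_insert hiS]
        congr 1
        rw [Finset.sum_congr rfl (fun l hl => (Finset.mem_filter.1 hl).2)]
        simp [hS]
      have hSk : S.card + 1 ≤ k := by
        have : (S.card : ℝ) < k := by rw [hsum] at hs; linarith
        exact_mod_cast Nat.add_one_le_iff.2 (by exact_mod_cast this)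
      have hv1 : (fun l => if l ∈ insert i S then (1:ℝ) else 0) ∈ Vset d k :=
        ⟨insert i S, by rwa [Finset.card_insert_of_notMem hiS], rfl⟩
      have hv2 : (fun l => if l ∈ S then (1:ℝ) else 0) ∈ Vset d k :=
        ⟨S, by omega, rfl⟩
      have hcomb : θ i • (fun l => if l ∈ insert i S then (1:ℝ) else 0)
          + (1 - θ i) • (fun l => if l ∈ S then (1:ℝ) else 0) = θ := by
        funext l
        simp only [Pi.add_apply, Pi.smul_apply, smul_eq_mul, Finset.mem_insert]
        rcases eq_or_ne l i with rfl | hl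
        · simp [hiS]
        · rcases hone l hl with h | h
          · have : l ∉ S := by simp [hS, h]
            simp [hl, this, h]
          · have : l ∈ S := by simp [hS, h]
            simp [this, h]
      rw [← hcomb]
      exact (convex_convexHull ℝ (Vset d k)) (subset_convexHull ℝ _ hv1)
        (subset_convexHull ℝ _ hv2) hia.le (by linarith) (by ring)

lemma mem_hull_V (k : ℕ) (θ : Fin d → ℝ) (h0 : ∀ i, 0 ≤ θ i) (h1 : ∀ i, θ i ≤ 1)
    (hs : ∑ i, θ i ≤ (k:ℝ)) : θ ∈ convexHull ℝ (Vset d k) :=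
  mem_hull_V_aux k _ θ h0 h1 hs le_rfl

variable {d : ℕ}




lemma zero_mem_Sset (k : ℕ) : (0 : Fin d → ℝ) ∈ Sset d k := by
  constructor
  · simp [Set.ncard_empty]
  · simp

lemma div_mem_hull (k : ℕ) (w θ : Fin d → ℝ) (hθ0 : ∀ i, 0 < θ i) (hθ1 : ∀ i, θ i ≤ 1)
    (hθs : ∑ i, θ i ≤ (k:ℝ)) {r : ℝ} (hr : 0 < r) (hwθ : ∑ i, w i ^ 2 / θ i ≤ r) :
    (Real.sqrt r)⁻¹ • w ∈ convexHull ℝ (Sset d k) := by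
  classical
  have hhull := mem_hull_V k θ (fun i => (hθ0 i).le) hθ1 hθs
  rw [_root_.convexHull_eq] at hhull
  obtain ⟨ι, t, lam, z, hlam0, hlam1, hz, hcm⟩ := hhull
  rw [Finset.centerMass_eq_of_sum_1 _ _ hlam1] at hcm
  choose! A hAcard hAz using hz
  have hθpt : ∀ i, θ i = ∑ j ∈ t, lam j * (if i ∈ A j then (1:ℝ) else 0) := by
    intro i
    conv_lhs => rw [← hcm]
    rw [Finset.sum_apply]
    exact Finset.sum_congr rfl fun j hj => by rw [hAz j hj]; rfl
  set v : ι → Fin d → ℝ := fun j i => if i ∈ A j then w i / θ i else 0 with hv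
  set N : ι → ℝ := fun j => Real.sqrt (∑ i, v j i ^ 2) with hN
  have hN0 : ∀ j, 0 ≤ N j := fun j => Real.sqrt_nonneg _
  have hvsq : ∀ j, (0:ℝ) ≤ ∑ i, v j i ^ 2 := fun j => Finset.sum_nonneg fun i _ => sq_nonneg _
  have hNsq : ∀ j, N j ^ 2 = ∑ i, v j i ^ 2 := fun j => Real.sq_sqrt (hvsq j)
  have hw_eq : ∀ i, ∑ j ∈ t, lam j * v j i = w i := by
    intro i
    have h1 : ∀ j ∈ t, lam j * v j i
        = (w i / θ i) * (lam j * (if i ∈ A j then (1:ℝ) else 0)) := by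
      intro j _
      by_cases h : i ∈ A j <;> simp [hv, h] <;> ring
    rw [Finset.sum_congr rfl h1, ← Finset.mul_sum, ← hθpt, div_mul_cancel₀]
    exact (hθ0 i).ne'
  have hsum2 : ∑ j ∈ t, lam j * N j ^ 2 = ∑ i, w i ^ 2 / θ i := by
    have h1 : ∀ j ∈ t, lam j * N j ^ 2 = ∑ i, lam j * v j i ^ 2 := by
      intro j _
      rw [hNsq j, Finset.mul_sum]
    rw [Finset.sum_congr rfl h1, Finset.sum_comm]
    refine Finset.sum_congr rfl fun i _ => ?_
    have h2 : ∀ j ∈ t, lam j * v j i ^ 2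
        = (w i ^ 2 / θ i ^ 2) * (lam j * (if i ∈ A j then (1:ℝ) else 0)) := by
      intro j _
      by_cases h : i ∈ A j <;> simp [hv, h, div_pow] <;> ring
    rw [Finset.sum_congr rfl h2, ← Finset.mul_sum, ← hθpt]
    have hne : θ i ≠ 0 := (hθ0 i).ne'
    field_simp
  set m := ∑ j ∈ t, lam j * N j with hm
  have hm0 : 0 ≤ m := Finset.sum_nonneg fun j hj => mul_nonneg (hlam0 j hj) (hN0 j)
  have hmsq : m ^ 2 ≤ r := by
    have hcs := Finset.sum_mul_sq_le_sq_mul_sq t (fun j => Real.sqrt (lam j))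
      (fun j => Real.sqrt (lam j) * N j)
    have e1 : ∑ j ∈ t, Real.sqrt (lam j) * (Real.sqrt (lam j) * N j) = m := by
      refine Finset.sum_congr rfl fun j hj => ?_
      rw [← mul_assoc, Real.mul_self_sqrt (hlam0 j hj)]
    have e2 : ∑ j ∈ t, Real.sqrt (lam j) ^ 2 = 1 := by
      rw [← hlam1]
      exact Finset.sum_congr rfl fun j hj => Real.sq_sqrt (hlam0 j hj)
    have e3 : ∑ j ∈ t, (Real.sqrt (lam j) * N j) ^ 2 = ∑ j ∈ t, lam j * N j ^ 2 := by
      refine Finset.sum_congr rfl fun j hj => ?_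
      rw [mul_pow, Real.sq_sqrt (hlam0 j hj)]
    rw [e1, e2, e3, one_mul, hsum2] at hcs
    exact hcs.trans hwθ
  have hmr : m ≤ Real.sqrt r := by
    nlinarith [Real.sq_sqrt hr.le, Real.sqrt_nonneg r]
  set u : ι → Fin d → ℝ := fun j => (N j)⁻¹ • v j with hu
  have hu_mem : ∀ j ∈ t, u j ∈ Sset d k := by
    intro j hj
    constructor
    · have hsub : {i | u j i ≠ 0} ⊆ ((A j : Finset (Fin d)) : Set (Fin d)) := by
        intro i hi
        by_contra h
        apply hi
        simp only [hu, Pi.smul_apply, smul_eq_mul, hv]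
        rw [if_neg (by simpa using h)]
        ring
      calc {i | u j i ≠ 0}.ncard ≤ ((A j : Finset (Fin d)) : Set (Fin d)).ncard :=
            Set.ncard_le_ncard hsub (Set.toFinite _)
        _ = (A j).card := Set.ncard_coe_finset _
        _ ≤ k := hAcard j hj
    · by_cases hNj : N j = 0
      · have : ∀ i, u j i = 0 := fun i => by simp [hu, hNj]
        simp only [this]
        simp
      · have : ∑ i, u j i ^ 2 = 1 := by
          have : ∀ i, u j i ^ 2 = (N j)⁻¹ ^ 2 * v j i ^ 2 := fun i => by
            simp [hu, mul_pow]
          rw [Finset.sum_congr rfl fun i _ => this i, ← Finset.mul_sum, ← hNsq j]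
          field_simp
        rw [this]
        simp
  have hvz : ∀ j, N j = 0 → v j = 0 := by
    intro j hNj
    funext i
    have h0 : ∑ i, v j i ^ 2 = 0 := by
      have := hNsq j
      rw [hNj] at this
      simpa using this.symm
    have := (Finset.sum_eq_zero_iff_of_nonneg (fun i _ => sq_nonneg (v j i))).1 h0 i
      (Finset.mem_univ i)
    exact pow_eq_zero_iff (n := 2) (by norm_num) |>.1 this
  have hkey : ∀ j ∈ t, (lam j * N j) • u j = lam j • v j := by
    intro j _
    by_cases hNj : N j = 0
    · rw [hNj, hvz j hNj]
      simp
    · rw [hu]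
      funext i
      simp only [Pi.smul_apply, smul_eq_mul]
      field_simp
  have hw_comb : w = ∑ j ∈ t, (lam j * N j) • u j := by
    rw [Finset.sum_congr rfl hkey]
    funext i
    rw [Finset.sum_apply]
    exact (hw_eq i).symm
  rcases eq_or_lt_of_le hm0 with hm_eq | hm_pos
  · -- m = 0 : w = 0
    have hall : ∀ j ∈ t, lam j * N j = 0 := by
      intro j hj
      have := (Finset.sum_eq_zero_iff_of_nonneg
        (fun j hj => mul_nonneg (hlam0 j hj) (hN0 j))).1 hm_eq.symm j hj
      exact this
    have hw0 : w = 0 := by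
      rw [hw_comb]
      refine Finset.sum_eq_zero fun j hj => by rw [hall j hj, zero_smul]
    rw [hw0, smul_zero]
    exact subset_convexHull ℝ _ (zero_mem_Sset k)
  · set y := t.centerMass (fun j => lam j * N j) u with hy
    have hy_mem : y ∈ convexHull ℝ (Sset d k) :=
      Finset.centerMass_mem_convexHull t (fun j hj => mul_nonneg (hlam0 j hj) (hN0 j))
        (by rwa [← hm]) hu_mem
    have hy_eq : y = m⁻¹ • w := by
      rw [hy, Finset.centerMass, ← hm, hw_comb]
    have hfinal : (Real.sqrt r)⁻¹ • w = (m / Real.sqrt r) • y + (1 - m / Real.sqrt r) • 0 := by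
      rw [hy_eq, smul_zero, add_zero, smul_smul]
      congr 1
      field_simp
    rw [hfinal]
    have hsr : 0 < Real.sqrt r := Real.sqrt_pos.2 hr
    exact (convex_convexHull ℝ (Sset d k)) hy_mem
      (subset_convexHull ℝ _ (zero_mem_Sset k))
      (div_nonneg hm0 hsr.le)
      (by rw [sub_nonneg, div_le_one hsr]; exact hmr)
      (by ring)

end Aux



def Tset (d k : ℕ) : Set (Fin d → ℝ) :=
  {θ : Fin d → ℝ | (∀ i, 0 < θ i ∧ θ i ≤ 1) ∧ ∑ i, θ i ≤ (k : ℝ)}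




lemma Tset_nonempty {k : ℕ} (hk1 : 1 ≤ k) (hkd : k ≤ d) : ((fun _ => (k:ℝ)/d) : Fin d → ℝ) ∈ Tset d k := by
  have hd : (0:ℝ) < d := by
    have : 1 ≤ d := le_trans hk1 hkd
    exact_mod_cast Nat.lt_of_lt_of_le Nat.zero_lt_one this
  have hk : (0:ℝ) < k := by exact_mod_cast hk1
  refine ⟨fun i => ⟨div_pos hk hd, ?_⟩, ?_⟩
  · rw [div_le_one hd]; exact_mod_cast hkd
  · rw [Finset.sum_const, Finset.card_univ, Fintype.card_fin, nsmul_eq_mul]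
    rw [mul_comm, div_mul_cancel₀ _ hd.ne']

lemma bdd_below_range (w : Fin d → ℝ) {k : ℕ} :
    BddBelow (Set.range fun (θ : Tset d k) => ∑ i, w i ^ 2 / (θ : Fin d → ℝ) i) := by
  refine ⟨0, ?_⟩
  rintro x ⟨θ, rfl⟩
  exact Finset.sum_nonneg fun i _ => div_nonneg (sq_nonneg _) (θ.2.1 i).1.le

-- direction: hull ⊆ ball
lemma hull_subset_ball {k : ℕ} (hk1 : 1 ≤ k) (hkd : k ≤ d) :
    convexHull ℝ (Sset d k) ⊆ {w : Fin d → ℝ | thetaNorm (Tset d k) w ≤ 1} := by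
  classical
  intro w hw
  rw [_root_.convexHull_eq] at hw
  obtain ⟨ι, t, lam, u, hlam0, hlam1, hu, hcm⟩ := hw
  rw [Finset.centerMass_eq_of_sum_1 _ _ hlam1] at hcm
  have hw_eq : ∀ i, w i = ∑ j ∈ t, lam j * u j i := by
    intro i
    conv_lhs => rw [← hcm]
    rw [Finset.sum_apply]
    rfl
  set b : ι → Fin d → ℝ := fun j i => if u j i = 0 then 0 else 1 with hb
  set β : Fin d → ℝ := fun i => ∑ j ∈ t, lam j * b j i with hβ
  set γ : Fin d → ℝ := fun i => ∑ j ∈ t, lam j * u j i ^ 2 with hγ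
  have hb01 : ∀ j i, 0 ≤ b j i ∧ b j i ≤ 1 := by
    intro j i
    by_cases h : u j i = 0 <;> simp [hb, h]
  have hβ0 : ∀ i, 0 ≤ β i :=
    fun i => Finset.sum_nonneg fun j hj => mul_nonneg (hlam0 j hj) (hb01 j i).1
  have hβ1 : ∀ i, β i ≤ 1 := by
    intro i
    calc β i ≤ ∑ j ∈ t, lam j := by
          refine Finset.sum_le_sum fun j hj => ?_
          nlinarith [(hb01 j i).2, hlam0 j hj]
      _ = 1 := hlam1
  have hγ0 : ∀ i, 0 ≤ γ i :=
    fun i => Finset.sum_nonneg fun j hj => mul_nonneg (hlam0 j hj) (sq_nonneg _)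
  have hγsum : ∑ i, γ i ≤ 1 := by
    rw [hγ]
    rw [Finset.sum_comm]
    calc ∑ j ∈ t, ∑ i, lam j * u j i ^ 2 ≤ ∑ j ∈ t, lam j := by
          refine Finset.sum_le_sum fun j hj => ?_
          rw [← Finset.mul_sum]
          nlinarith [sq_sum_le_one (hu j hj).2, hlam0 j hj,
            Finset.sum_nonneg (fun i (_ : i ∈ Finset.univ) => sq_nonneg (u j i))]
      _ = 1 := hlam1
  have hβsum : ∑ i, β i ≤ (k:ℝ) := by
    rw [hβ, Finset.sum_comm]
    calc ∑ j ∈ t, ∑ i, lam j * b j i ≤ ∑ j ∈ t, lam j * k := by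
          refine Finset.sum_le_sum fun j hj => ?_
          rw [← Finset.mul_sum]
          have hcard : ∑ i, b j i ≤ (k:ℝ) := by
            have e1 : ∀ i, b j i = if u j i ≠ 0 then (1:ℝ) else 0 := by
              intro i; by_cases h : u j i = 0 <;> simp [hb, h]
            rw [Finset.sum_congr rfl fun i _ => e1 i, Finset.sum_boole]
            have e2 : {i | u j i ≠ 0} = ↑(Finset.univ.filter (fun i => u j i ≠ 0)) := by
              ext i; simp
            have := (hu j hj).1
            rw [e2, Set.ncard_coe_finset] at this
            exact_mod_cast this
          nlinarith [hlam0 j hj, Finset.sum_nonneg (fun i (_ : i ∈ Finset.univ) => (hb01 j i).1)]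
      _ = (k:ℝ) := by rw [← Finset.sum_mul, hlam1, one_mul]
  have hCS : ∀ i, w i ^ 2 ≤ β i * γ i := by
    intro i
    have hcs := Finset.sum_mul_sq_le_sq_mul_sq t (fun j => Real.sqrt (lam j * b j i))
      (fun j => Real.sqrt (lam j) * u j i)
    have e1 : ∑ j ∈ t, Real.sqrt (lam j * b j i) * (Real.sqrt (lam j) * u j i)
        = ∑ j ∈ t, lam j * u j i := by
      refine Finset.sum_congr rfl fun j hj => ?_
      by_cases h : u j i = 0
      · simp [hb, h]
      · have hbj : b j i = 1 := by simp [hb, h]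
        rw [hbj, mul_one, ← mul_assoc, Real.mul_self_sqrt (hlam0 j hj)]
    have e2 : ∑ j ∈ t, Real.sqrt (lam j * b j i) ^ 2 = β i := by
      refine Finset.sum_congr rfl fun j hj => ?_
      exact Real.sq_sqrt (mul_nonneg (hlam0 j hj) (hb01 j i).1)
    have e3 : ∑ j ∈ t, (Real.sqrt (lam j) * u j i) ^ 2 = γ i := by
      refine Finset.sum_congr rfl fun j hj => ?_
      rw [mul_pow, Real.sq_sqrt (hlam0 j hj)]
    rw [e1, e2, e3] at hcs
    rw [hw_eq i]
    exact hcs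
  -- now bound the infimum
  have hd : (0:ℝ) < d := by
    have : 1 ≤ d := le_trans hk1 hkd
    exact_mod_cast Nat.lt_of_lt_of_le Nat.zero_lt_one this
  have hk : (0:ℝ) < k := by exact_mod_cast hk1
  have hkd' : (k:ℝ) ≤ d := by exact_mod_cast hkd
  have hinf : (⨅ θ : Tset d k, ∑ i, w i ^ 2 / (θ : Fin d → ℝ) i) ≤ 1 := by
    refine le_of_forall_pos_le_add fun δ hδ => ?_
    set ε : ℝ := δ / (1 + δ) with hε
    have hε0 : 0 < ε := div_pos hδ (by linarith)
    have hε1 : ε < 1 := by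
      rw [hε, div_lt_one (by linarith)]; linarith
    set θε : Fin d → ℝ := fun i => (1 - ε) * β i + ε * k / d with hθε
    have hθε_mem : θε ∈ Tset d k := by
      refine ⟨fun i => ⟨?_, ?_⟩, ?_⟩
      · have h2 : 0 < ε * k / d := by positivity
        simp only [hθε]
        nlinarith [hβ0 i]
      · have h2 : ε * k / d ≤ ε := by
          rw [div_le_iff₀ hd]
          nlinarith
        simp only [hθε]
        nlinarith [hβ1 i, hβ0 i]
      · have : ∑ i, θε i = (1 - ε) * ∑ i, β i + ε * k := by
          rw [hθε, Finset.sum_add_distrib, ← Finset.mul_sum, Finset.sum_const,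
            Finset.card_univ, Fintype.card_fin, nsmul_eq_mul]
          congr 1
          field_simp
        rw [this]
        nlinarith [hβsum]
    have hbound : ∑ i, w i ^ 2 / θε i ≤ 1 + δ := by
      have hper : ∀ i, w i ^ 2 / θε i ≤ γ i / (1 - ε) := by
        intro i
        have hθεpos : 0 < θε i := (hθε_mem.1 i).1
        rcases eq_or_lt_of_le (hβ0 i) with hβi | hβi
        · have hwi : w i ^ 2 = 0 := by nlinarith [hCS i, sq_nonneg (w i), hγ0 i]
          rw [hwi, zero_div]
          exact div_nonneg (hγ0 i) (by linarith)
        · rw [div_le_div_iff₀ hθεpos (by linarith)]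
          have hθεge : (1 - ε) * β i ≤ θε i := by
            have h3 : 0 ≤ ε * (k:ℝ) / d := by positivity
            simp only [hθε]
            nlinarith
          nlinarith [hCS i, hγ0 i]
      calc ∑ i, w i ^ 2 / θε i ≤ ∑ i, γ i / (1 - ε) :=
            Finset.sum_le_sum fun i _ => hper i
        _ = (∑ i, γ i) / (1 - ε) := by rw [Finset.sum_div]
        _ ≤ 1 / (1 - ε) := by
            have h1ε : (0:ℝ) < 1 - ε := by linarith
            exact (div_le_div_iff_of_pos_right h1ε).2 hγsum
        _ = 1 + δ := by
            rw [hε]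
            field_simp
            ring
    calc (⨅ θ : Tset d k, ∑ i, w i ^ 2 / (θ : Fin d → ℝ) i)
        ≤ ∑ i, w i ^ 2 / θε i := ciInf_le (bdd_below_range w) ⟨θε, hθε_mem⟩
      _ ≤ 1 + δ := hbound
  rw [Set.mem_setOf_eq, thetaNorm]
  calc Real.sqrt (⨅ θ : Tset d k, ∑ i, w i ^ 2 / (θ : Fin d → ℝ) i)
      ≤ Real.sqrt 1 := Real.sqrt_le_sqrt hinf
    _ = 1 := Real.sqrt_one

-- direction: ball ⊆ hull
lemma ball_subset_hull {k : ℕ} (hk1 : 1 ≤ k) (hkd : k ≤ d) :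
    {w : Fin d → ℝ | thetaNorm (Tset d k) w ≤ 1} ⊆ convexHull ℝ (Sset d k) := by
  intro w hw
  rw [Set.mem_setOf_eq, thetaNorm] at hw
  have hne : Nonempty (Tset d k) := ⟨⟨_, Tset_nonempty hk1 hkd⟩⟩
  have hinf0 : 0 ≤ ⨅ θ : Tset d k, ∑ i, w i ^ 2 / (θ : Fin d → ℝ) i :=
    le_ciInf fun θ => Finset.sum_nonneg fun i _ => div_nonneg (sq_nonneg _) (θ.2.1 i).1.le
  have hinf1 : (⨅ θ : Tset d k, ∑ i, w i ^ 2 / (θ : Fin d → ℝ) i) ≤ 1 := by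
    nlinarith [Real.sq_sqrt hinf0, Real.sqrt_nonneg
      (⨅ θ : Tset d k, ∑ i, w i ^ 2 / (θ : Fin d → ℝ) i)]
  have hmem : ∀ n : ℕ, (Real.sqrt (1 + 1/((n:ℝ)+1)))⁻¹ • w ∈ convexHull ℝ (Sset d k) := by
    intro n
    have hpos : (0:ℝ) < 1/((n:ℝ)+1) := by positivity
    have hlt : (⨅ θ : Tset d k, ∑ i, w i ^ 2 / (θ : Fin d → ℝ) i) < 1 + 1/((n:ℝ)+1) := by
      linarith
    obtain ⟨θ, hθ⟩ := exists_lt_of_ciInf_lt hlt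
    exact div_mem_hull k w θ (fun i => (θ.2.1 i).1) (fun i => (θ.2.1 i).2) θ.2.2
      (by linarith) hθ.le
  have htend : Filter.Tendsto (fun n : ℕ => (Real.sqrt (1 + 1/((n:ℝ)+1)))⁻¹ • w)
      Filter.atTop (nhds w) := by
    have h1 : Filter.Tendsto (fun n : ℕ => 1 + 1/((n:ℝ)+1)) Filter.atTop (nhds 1) := by
      have := tendsto_one_div_add_atTop_nhds_zero_nat (𝕜 := ℝ)
      have h2 := Filter.Tendsto.const_add (1:ℝ) this
      simpa using h2
    have h2 : Filter.Tendsto (fun n : ℕ => (Real.sqrt (1 + 1/((n:ℝ)+1)))⁻¹)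
        Filter.atTop (nhds 1) := by
      have h3 := (Real.continuous_sqrt.tendsto (1:ℝ)).comp h1
      have h4 := h3.inv₀ (by simp)
      simpa using h4
    have h5 := h2.smul_const w
    simpa using h5
  exact isClosed_hull_S.mem_of_tendsto htend (Filter.Eventually.of_forall hmem)

theorem theta_norm_eq_ksup {d k : ℕ} (hk1 : 1 ≤ k) (hkd : k ≤ d) :
    {w : Fin d → ℝ |
        thetaNorm {θ : Fin d → ℝ | (∀ i, 0 < θ i ∧ θ i ≤ 1) ∧ ∑ i, θ i ≤ (k : ℝ)} w ≤ 1} =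
      convexHull ℝ
        {w : Fin d → ℝ | {i | w i ≠ 0}.ncard ≤ k ∧ Real.sqrt (∑ i, w i ^ 2) ≤ 1} := by
  exact Set.Subset.antisymm (ball_subset_hull hk1 hkd) (hull_subset_ball hk1 hkd)
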